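/- For every k-module V there is a natural short exact sequence Tor_1^{k(Σ_n)}(γ_n/Lie(n), V^{⊗n}) ↪ Lie(n) ⊗_{k(Σ_n)} V^{⊗n} ↠ L_n(V), where the surjection sends [[x_1,x_2],…,x_n] ⊗ (a_1⊗⋯⊗a_n) to [[a_1,a_2],…,a_n]. In particular the natural map Lie(n) ⊗_{k(Σ_n)} V^{⊗n} → L_n(V) is surjective. -/

import Mathlib

open scoped TensorProduct

attribute [local instance 100] LieRing.ofAssociativeRing

/-- Left-normed Lie bracketing of a list, `⁅a,b⁆ = a*b - b*a`. -/
noncomputable def lnb {T : Type} [Ring T] : List T → T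
  | [] => 0
  | x :: xs => xs.foldl (fun a b => ⁅a, b⁆) x

section
variable (k : Type) [Field k] (n : ℕ)

/-- The canonical identification `V^{⊗n} → T(V)` of the tensor power with the degree-`n`
component of the tensor algebra, `a_1 ⊗ ⋯ ⊗ a_n ↦ a_1 ⋯ a_n`. -/
noncomputable def toT (V : Type) [AddCommGroup V] [Module k V] :
    (⨂[k] (i : Fin n), V) →ₗ[k] TensorAlgebra k V :=
  PiTensorProduct.lift
    ((MultilinearMap.mkPiAlgebraFin k n (TensorAlgebra k V)).compLinearMap
      fun _ => TensorAlgebra.ι k)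

/-- The `n`-th Lie power `L_n(V) ⊆ V^{⊗n}`: the elements whose image in the tensor algebra lies
in the free Lie algebra (the Lie subalgebra generated by `V`). -/
noncomputable def LiePow (V : Type) [AddCommGroup V] [Module k V] :
    Submodule k (⨂[k] (i : Fin n), V) :=
  Submodule.comap (toT k n V)
    (LieSubalgebra.lieSpan k (TensorAlgebra k V)
      (Set.range (TensorAlgebra.ι k : V →ₗ[k] TensorAlgebra k V))).toSubmodule

/-- The multilinear monomial `x_{σ(1)} ⊗ ⋯ ⊗ x_{σ(n)}`. -/
noncomputable def monom (σ : Equiv.Perm (Fin n)) : ⨂[k] (i : Fin n), (Fin n → k) :=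
  PiTensorProduct.tprod k (fun i => Pi.single (σ i) (1 : k))

/-- `γ_n`, the span of the multilinear monomials. -/
noncomputable def gamman : Submodule k (⨂[k] (i : Fin n), (Fin n → k)) :=
  Submodule.span k (Set.range fun σ : Equiv.Perm (Fin n) => monom k n σ)

/-- `Lie(n) = γ_n(L_n)`, the multilinear component of `L_n(V̄_n)`. -/
noncomputable def LieMulti : Submodule k (⨂[k] (i : Fin n), (Fin n → k)) :=
  LiePow k n (Fin n → k) ⊓ gamman k n

/-- The right `Σ_n`-action on `V̄_n^{⊗n}` by the substitution `x_i ↦ x_{σ(i)}`. -/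
noncomputable def rAct (σ : Equiv.Perm (Fin n)) :
    (⨂[k] (i : Fin n), (Fin n → k)) →ₗ[k] ⨂[k] (i : Fin n), (Fin n → k) :=
  PiTensorProduct.map fun _ : Fin n => LinearMap.funLeft k k ⇑σ.symm

variable (V : Type) [AddCommGroup V] [Module k V]

/-- The left `Σ_n`-action on `V^{⊗n}` permuting tensor factors. -/
noncomputable def lAct (σ : Equiv.Perm (Fin n)) :
    (⨂[k] (i : Fin n), V) →ₗ[k] ⨂[k] (i : Fin n), V :=
  (PiTensorProduct.reindex k (fun _ : Fin n => V) σ.symm).toLinearMap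

/-- The balancing relations defining `M ⊗_{k(Σ_n)} V^{⊗n}` for a right `k(Σ_n)`-module `M`
realized inside `V̄_n^{⊗n}` via `u`. -/
noncomputable def balRel (M : Type) [AddCommGroup M] [Module k M]
    (u : M →ₗ[k] ⨂[k] (i : Fin n), (Fin n → k)) :
    Submodule k (M ⊗[k] (⨂[k] (i : Fin n), V)) :=
  Submodule.span k
    {z | ∃ (x y : M) (σ : Equiv.Perm (Fin n)) (v : ⨂[k] (i : Fin n), V),
        u y = rAct k n σ (u x) ∧ z = y ⊗ₜ[k] v - x ⊗ₜ[k] (lAct k n V σ v)}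

end
section ListLemmas
variable {T S : Type} [Ring T] [Ring S]

lemma lnb_concat (x y : T) (xs : List T) : lnb (x :: xs ++ [y]) = ⁅lnb (x :: xs), y⁆ := by
  simp [lnb, List.foldl_append]

variable {F : Type} [FunLike F T S] [RingHomClass F T S]

lemma map_foldl_lie (f : F) : ∀ (xs : List T) (x : T),
    f (xs.foldl (fun a b => ⁅a, b⁆) x) = (xs.map f).foldl (fun a b => ⁅a, b⁆) (f x)
  | [], x => rfl
  | y :: ys, x => by
      rw [List.foldl_cons, map_foldl_lie f ys, List.map_cons, List.foldl_cons]
      congr 1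
      simp [Ring.lie_def, map_sub, map_mul]

lemma map_lnb (f : F) (l : List T) : f (lnb l) = lnb (l.map f) := by
  cases l with
  | nil => simp [lnb]
  | cons x xs => simp only [lnb, List.map_cons]; rw [map_foldl_lie]

variable {k : Type} [CommRing k] [Algebra k T]

lemma foldl_lie_mem (K : LieSubalgebra k T) : ∀ (xs : List T) (x : T), x ∈ K →
    (∀ y ∈ xs, y ∈ K) → xs.foldl (fun a b => ⁅a, b⁆) x ∈ K
  | [], x, hx, _ => hx
  | y :: ys, x, hx, h => by
      rw [List.foldl_cons]
      exact foldl_lie_mem K ys _ (K.lie_mem hx (h y (by simp)))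
        (fun z hz => h z (by simp [hz]))

lemma lnb_mem (K : LieSubalgebra k T) (l : List T) (h : ∀ x ∈ l, x ∈ K) : lnb l ∈ K := by
  cases l with
  | nil => simpa [lnb] using K.zero_mem
  | cons x xs => exact foldl_lie_mem K xs x (h x (by simp)) fun z hz => h z (by simp [hz])

end ListLemmas
section Deg
variable (k : Type) [Field k] (n : ℕ) (V : Type) [AddCommGroup V] [Module k V]

lemma toT_tprod (a : Fin n → V) :
    toT k n V (PiTensorProduct.tprod k a) = (List.ofFn fun i => TensorAlgebra.ι k (a i)).prod := by
  simp [toT, MultilinearMap.mkPiAlgebraFin_apply]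

/-- degree-`m` component submodule of the tensor algebra -/
noncomputable def Deg (m : ℕ) : Submodule k (TensorAlgebra k V) :=
  Submodule.comap (TensorAlgebra.toDirectSum (R := k) (M := V)).toLinearMap
    (LinearMap.range (DirectSum.lof k ℕ (fun m => ⨂[k]^m V) m))

variable {k n V}

lemma ι_mem_Deg (x : V) : TensorAlgebra.ι k x ∈ Deg k V 1 := by
  refine ⟨PiTensorProduct.tprod k fun _ : Fin 1 => x, ?_⟩
  simp [DirectSum.lof_eq_of, TensorAlgebra.toDirectSum_ι]

lemma mul_mem_Deg {i j : ℕ} {u v : TensorAlgebra k V} (hu : u ∈ Deg k V i)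
    (hv : v ∈ Deg k V j) : u * v ∈ Deg k V (i + j) := by
  obtain ⟨a, ha⟩ := hu
  obtain ⟨b, hb⟩ := hv
  refine ⟨@GradedMonoid.GMul.mul _ (fun m => ⨂[k]^m V) _ _ i j a b, ?_⟩
  simp only [Deg, AlgHom.toLinearMap_apply, map_mul] at *
  rw [← ha, ← hb]
  simp [DirectSum.lof_eq_of, DirectSum.of_mul_of]

lemma lie_mem_Deg {i j : ℕ} {u v : TensorAlgebra k V} (hu : u ∈ Deg k V i)
    (hv : v ∈ Deg k V j) : ⁅u, v⁆ ∈ Deg k V (i + j) := by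
  rw [Ring.lie_def]
  refine sub_mem (mul_mem_Deg hu hv) ?_
  have := mul_mem_Deg hv hu
  rwa [add_comm] at this

lemma tds_toT :
    (TensorAlgebra.toDirectSum (R := k) (M := V)).toLinearMap ∘ₗ toT k n V
      = DirectSum.lof k ℕ (fun m => ⨂[k]^m V) n := by
  apply PiTensorProduct.ext
  ext a
  simp only [LinearMap.compMultilinearMap_apply, LinearMap.comp_apply,
    AlgHom.toLinearMap_apply, toT_tprod, DirectSum.lof_eq_of]
  rw [← TensorAlgebra.tprod_apply, TensorAlgebra.toDirectSum_tensorPower_tprod]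

lemma toT_inj : Function.Injective (toT k n V) := by
  have h1 : Function.Injective ((TensorAlgebra.toDirectSum (R := k) (M := V)).toLinearMap
      ∘ₗ toT k n V) := by
    rw [tds_toT]
    intro x y hxy
    apply DirectSum.of_injective n
    rwa [← DirectSum.lof_eq_of k, ← DirectSum.lof_eq_of k]
  exact fun x y hxy => h1 (by simp [LinearMap.comp_apply, hxy])

lemma toT_mem_Deg (v : ⨂[k] (i : Fin n), V) : toT k n V v ∈ Deg k V n :=
  ⟨v, by rw [← tds_toT]; rfl⟩

lemma ofDirectSum_lof (w : ⨂[k] (i : Fin n), V) :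
    TensorAlgebra.ofDirectSum (DirectSum.lof k ℕ (fun m => ⨂[k]^m V) n w) = toT k n V w := by
  have : (TensorAlgebra.ofDirectSum (R := k) (M := V)).toLinearMap ∘ₗ
      DirectSum.lof k ℕ (fun m => ⨂[k]^m V) n = toT k n V := by
    apply PiTensorProduct.ext
    ext a
    simp only [LinearMap.compMultilinearMap_apply, LinearMap.comp_apply,
      AlgHom.toLinearMap_apply, toT_tprod, DirectSum.lof_eq_of]
    rw [TensorAlgebra.ofDirectSum_of_tprod, TensorAlgebra.tprod_apply]
  exact congrArg (fun f => f w) (congrArg DFunLike.coe this)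

lemma Deg_n_exists {x : TensorAlgebra k V} (hx : x ∈ Deg k V n) :
    ∃ v : ⨂[k] (i : Fin n), V, toT k n V v = x := by
  obtain ⟨w, hw⟩ := hx
  refine ⟨w, ?_⟩
  rw [← ofDirectSum_lof, hw]
  exact TensorAlgebra.ofDirectSum_toDirectSum x

/-- projection onto degree `n` landing in the tensor power -/
noncomputable def piProj : TensorAlgebra k V →ₗ[k] ⨂[k] (i : Fin n), V :=
  (DirectSum.component k ℕ (fun m => ⨂[k]^m V) n) ∘ₗ
    (TensorAlgebra.toDirectSum (R := k) (M := V)).toLinearMap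

variable (k n V)

lemma piProj_toT (v : ⨂[k] (i : Fin n), V) : piProj (k := k) (n := n) (V := V) (toT k n V v) = v := by
  have := congrArg (fun f => f v) (congrArg DFunLike.coe (tds_toT (k := k) (n := n) (V := V)))
  simp only [LinearMap.comp_apply] at this
  simp [piProj, LinearMap.comp_apply, this, DirectSum.component.lof_self]

lemma piProj_ne {m : ℕ} (hmn : m ≠ n) {x : TensorAlgebra k V} (hx : x ∈ Deg k V m) :
    piProj (k := k) (n := n) (V := V) x = 0 := by
  obtain ⟨w, hw⟩ := hx
  simp only [piProj, LinearMap.comp_apply, AlgHom.toLinearMap_apply]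
  have hw' : TensorAlgebra.toDirectSum x = DirectSum.lof k ℕ (fun m => ⨂[k]^m V) m w := hw.symm
  rw [hw', DirectSum.lof_eq_of]
  exact DirectSum.of_eq_of_ne _ _ _ hmn.symm

end Deg
section C
variable (k : Type) [Field k] (n : ℕ)

lemma monom_li : LinearIndependent k (monom k n) := by
  rw [Fintype.linearIndependent_iff]
  intro c hc τ
  let φ : (⨂[k] (i : Fin n), (Fin n → k)) →ₗ[k] k :=
    PiTensorProduct.lift ((MultilinearMap.mkPiAlgebra k (Fin n) k).compLinearMap
      fun i => LinearMap.proj (τ i))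
  have hφ : ∀ σ, φ (monom k n σ) = if σ = τ then 1 else 0 := by
    intro σ
    simp only [φ, monom, PiTensorProduct.lift.tprod, MultilinearMap.compLinearMap_apply,
      MultilinearMap.mkPiAlgebra_apply, LinearMap.proj_apply]
    simp only [Pi.single_apply]
    rw [Finset.prod_boole]
    congr 1
    simp only [eq_iff_iff]
    constructor
    · intro h; apply Equiv.ext; intro i; exact (h i (Finset.mem_univ i)).symm
    · intro h i _; rw [h]
  have := congrArg φ hc
  rw [map_sum, map_zero] at this
  simp only [map_smul, hφ, smul_eq_mul, mul_ite, mul_one, mul_zero] at this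
  rwa [Finset.sum_ite_eq' Finset.univ τ c, if_pos (Finset.mem_univ τ)] at this

/-- basis of `γ_n` given by the monomials -/
noncomputable def bGam : Module.Basis (Equiv.Perm (Fin n)) k (gamman k n) :=
  Module.Basis.span (monom_li k n)

variable {k n}
variable {Γ : Type} [AddCommGroup Γ] [Module k Γ]
  (uΓ : Γ →ₗ[k] ⨂[k] (i : Fin n), (Fin n → k))
  (hΓinj : Function.Injective uΓ) (hΓ : LinearMap.range uΓ = gamman k n)

/-- basis of an abstract realization of `γ_n` -/
noncomputable def bGamma : Module.Basis (Equiv.Perm (Fin n)) k Γ :=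
  (bGam k n).map ((LinearEquiv.ofEq _ _ hΓ.symm) ≪≫ₗ (LinearEquiv.ofInjective uΓ hΓinj).symm)

lemma uΓ_bGamma (σ : Equiv.Perm (Fin n)) :
    uΓ (bGamma uΓ hΓinj hΓ σ) = monom k n σ := by
  have h1 : ∀ y : LinearMap.range uΓ, uΓ ((LinearEquiv.ofInjective uΓ hΓinj).symm y) = ↑y := by
    intro y
    have := LinearEquiv.apply_symm_apply (LinearEquiv.ofInjective uΓ hΓinj) y
    calc uΓ ((LinearEquiv.ofInjective uΓ hΓinj).symm y)
        = ↑(LinearEquiv.ofInjective uΓ hΓinj ((LinearEquiv.ofInjective uΓ hΓinj).symm y)) := rfl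
      _ = ↑y := by rw [this]
  simp only [bGamma, Module.Basis.map_apply, LinearEquiv.trans_apply, h1, LinearEquiv.coe_ofEq_apply]
  simp only [bGam]
  exact congrArg Subtype.val (Module.Basis.span_apply (monom_li k n) σ)

end C

section C2
variable {k : Type} [Field k] {n : ℕ} {V : Type} [AddCommGroup V] [Module k V]

lemma lAct_tprod (σ : Equiv.Perm (Fin n)) (a : Fin n → V) :
    lAct k n V σ (PiTensorProduct.tprod k a) = PiTensorProduct.tprod k (a ∘ σ) := by
  simp only [lAct, LinearEquiv.coe_coe, PiTensorProduct.reindex_tprod]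
  congr 1

lemma lAct_mul (σ τ : Equiv.Perm (Fin n)) :
    (lAct k n V τ) ∘ₗ (lAct k n V σ) = lAct k n V (σ * τ) := by
  apply PiTensorProduct.ext
  ext a
  simp only [LinearMap.compMultilinearMap_apply, LinearMap.comp_apply, lAct_tprod]
  congr 1

lemma rAct_monom (σ τ : Equiv.Perm (Fin n)) :
    rAct k n σ (monom k n τ) = monom k n (σ * τ) := by
  simp only [rAct, monom, PiTensorProduct.map_tprod]
  congr 1
  ext i j
  simp only [LinearMap.funLeft_apply, Equiv.Perm.coe_mul, Function.comp_apply]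
  rw [Pi.single_apply, Pi.single_apply]
  congr 1
  simp only [eq_iff_iff]
  exact Equiv.symm_apply_eq σ

end C2

section C3
variable {k : Type} [Field k] {n : ℕ} {V : Type} [AddCommGroup V] [Module k V]
  {Γ : Type} [AddCommGroup Γ] [Module k Γ]
  (uΓ : Γ →ₗ[k] ⨂[k] (i : Fin n), (Fin n → k))
  (hΓinj : Function.Injective uΓ) (hΓ : LinearMap.range uΓ = gamman k n)

lemma toT_tprod' (a : Fin n → V) :
    toT k n V (PiTensorProduct.tprod k a) = (List.ofFn fun i => TensorAlgebra.ι k (a i)).prod := by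
  simp [toT, MultilinearMap.mkPiAlgebraFin_apply]

/-- the structure map of the `Σ_n`-action: `θ g` is the operator on `V^{⊗n}` of `g ∈ Γ ≅ γ_n` -/
noncomputable def theta (V : Type) [AddCommGroup V] [Module k V] :
    Γ →ₗ[k] ((⨂[k] (i : Fin n), V) →ₗ[k] ⨂[k] (i : Fin n), V) :=
  (bGamma uΓ hΓinj hΓ).constr k (fun σ => lAct k n V σ)

lemma theta_basis (σ : Equiv.Perm (Fin n)) :
    theta uΓ hΓinj hΓ V (bGamma uΓ hΓinj hΓ σ) = lAct k n V σ :=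
  Module.Basis.constr_basis _ k _ σ

lemma theta_equivar (x y : Γ) (σ : Equiv.Perm (Fin n)) (h : uΓ y = rAct k n σ (uΓ x)) :
    theta uΓ hΓinj hΓ V y = (theta uΓ hΓinj hΓ V x) ∘ₗ lAct k n V σ := by
  set b := bGamma uΓ hΓinj hΓ with hb
  set D : Γ →ₗ[k] Γ := b.constr k (fun τ => b (σ * τ)) with hD
  have hDu : uΓ ∘ₗ D = (rAct k n σ) ∘ₗ uΓ := by
    apply b.ext
    intro τ
    simp only [LinearMap.comp_apply, hD, Module.Basis.constr_basis]
    rw [hb, uΓ_bGamma, uΓ_bGamma, rAct_monom]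
  have hyD : y = D x := by
    apply hΓinj
    rw [h]
    have := congrArg (fun f => f x) (congrArg DFunLike.coe hDu)
    simp only [LinearMap.comp_apply] at this
    exact this.symm
  have hTD : (theta uΓ hΓinj hΓ V) ∘ₗ D
      = (LinearMap.lcomp k _ (lAct k n V σ)) ∘ₗ (theta uΓ hΓinj hΓ V) := by
    apply b.ext
    intro τ
    simp only [LinearMap.comp_apply, hD, Module.Basis.constr_basis, LinearMap.lcomp_apply']
    rw [hb, theta_basis, theta_basis, ← lAct_mul]
  rw [hyD]
  have := congrArg (fun f => f x) (congrArg DFunLike.coe hTD)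
  simp only [LinearMap.comp_apply, LinearMap.lcomp_apply'] at this
  exact this

/-- substitution linear map `(Fin n → k) → T(V)`, `f ↦ ∑ f j • ι (a j)` -/
noncomputable def La (a : Fin n → V) : (Fin n → k) →ₗ[k] TensorAlgebra k V :=
  ∑ j : Fin n, LinearMap.smulRight (LinearMap.proj j) (TensorAlgebra.ι k (a j))

lemma La_single (a : Fin n → V) (i : Fin n) :
    La a (Pi.single i (1 : k)) = TensorAlgebra.ι k (a i) := by
  simp only [La, LinearMap.coe_sum, Finset.sum_apply, LinearMap.smulRight_apply,
    LinearMap.proj_apply]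
  rw [Finset.sum_eq_single i]
  · simp
  · intro j _ hj
    simp [Pi.single_eq_of_ne hj]
  · intro h; exact absurd (Finset.mem_univ i) h

/-- substitution algebra map `T(Fin n → k) → T(V)` -/
noncomputable def Sa (a : Fin n → V) : TensorAlgebra k (Fin n → k) →ₐ[k] TensorAlgebra k V :=
  TensorAlgebra.lift k (La a)

lemma toT_theta (g : Γ) (a : Fin n → V) :
    toT k n V (theta uΓ hΓinj hΓ V g (PiTensorProduct.tprod k a))
      = Sa a (toT k n (Fin n → k) (uΓ g)) := by
  have key : (toT k n V) ∘ₗ ((theta uΓ hΓinj hΓ V).flip (PiTensorProduct.tprod k a))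
      = (Sa (k := k) a).toLinearMap ∘ₗ (toT k n (Fin n → k)) ∘ₗ uΓ := by
    apply (bGamma uΓ hΓinj hΓ).ext
    intro σ
    simp only [LinearMap.comp_apply, LinearMap.flip_apply, theta_basis, uΓ_bGamma,
      AlgHom.toLinearMap_apply]
    rw [lAct_tprod, toT_tprod']
    show _ = Sa a (toT k n (Fin n → k) (monom k n σ))
    rw [monom, toT_tprod', map_list_prod]
    rw [List.map_ofFn]
    refine congrArg _ (congrArg _ (funext fun i => ?_))
    simp only [Function.comp_apply]
    show TensorAlgebra.ι k (a (σ i)) = Sa a (TensorAlgebra.ι k (Pi.single (σ i) 1))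
    rw [Sa, TensorAlgebra.lift_ι_apply, La_single]
  have := congrArg (fun f => f g) (congrArg DFunLike.coe key)
  simpa only [LinearMap.comp_apply, LinearMap.flip_apply, AlgHom.toLinearMap_apply] using this

end C3

section D
variable {k : Type} [Field k] {n : ℕ}

private def gg (k : Type) [Field k] (n : ℕ) : Fin n → TensorAlgebra k (Fin n → k) :=
  fun i => TensorAlgebra.ι k (Pi.single i (1 : k))

lemma perm_span (l : List (Fin n)) (hl : l ≠ []) :
    lnb (l.map (gg k n)) ∈
      Submodule.span k {x | ∃ m : List (Fin n), m.Perm l ∧ x = (m.map (gg k n)).prod} := by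
  induction l using List.reverseRecOn with
  | nil => exact absurd rfl hl
  | append_singleton l x ih =>
    cases l with
    | nil =>
      apply Submodule.subset_span
      exact ⟨[x], List.Perm.refl _, by simp [lnb]⟩
    | cons z zs =>
      have hzz : (z :: zs) ≠ [] := by simp
      have hmap : ((z :: zs) ++ [x]).map (gg k n)
          = gg k n z :: zs.map (gg k n) ++ [gg k n x] := by simp
      rw [hmap, lnb_concat]
      have ih' := ih hzz
      have hmap2 : (z :: zs).map (gg k n) = gg k n z :: zs.map (gg k n) := by simp
      rw [hmap2] at ih'
      refine Submodule.span_induction ?_ ?_ ?_ ?_ ih'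
      · rintro u ⟨m, hm, rfl⟩
        rw [Ring.lie_def]
        refine sub_mem (Submodule.subset_span ⟨m ++ [x], hm.append_right [x], ?_⟩)
          (Submodule.subset_span ⟨x :: m, ?_, ?_⟩)
        · simp [List.prod_append]
        · exact ((hm.cons x).trans (List.perm_append_singleton x (z :: zs)).symm)
        · simp
      · simpa using Submodule.zero_mem _
      · intro u v _ _ hu hv
        rw [add_lie]; exact add_mem hu hv
      · intro c u _ hu
        rw [smul_lie]; exact Submodule.smul_mem _ c hu

lemma exists_t : ∃ t : ⨂[k] (i : Fin n), (Fin n → k), t ∈ LieMulti k n ∧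
    toT k n (Fin n → k) t
      = lnb (List.ofFn fun i : Fin n => TensorAlgebra.ι k (Pi.single i (1 : k))) := by
  have hofn : (List.ofFn fun i : Fin n => TensorAlgebra.ι k (Pi.single i (1 : k)))
      = (List.finRange n).map (gg k n) := by
    rw [List.ofFn_eq_map]; rfl
  rcases Nat.eq_zero_or_pos n with h0 | hpos
  · refine ⟨0, Submodule.zero_mem _, ?_⟩
    subst h0
    simp [lnb]
  · have hl : List.finRange n ≠ [] := by
      simp only [ne_eq, List.finRange_eq_nil_iff]
      omega
    have hspan := perm_span (k := k) (List.finRange n) hl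
    have hle : Submodule.span k {x | ∃ m : List (Fin n), m.Perm (List.finRange n)
          ∧ x = (m.map (gg k n)).prod}
        ≤ Submodule.map (toT k n (Fin n → k)) (gamman k n) := by
      rw [Submodule.span_le]
      rintro x ⟨m, hm, rfl⟩
      have hlen : m.length = n := by rw [hm.length_eq, List.length_finRange]
      have hnd : m.Nodup := hm.symm.nodup (List.nodup_finRange n)
      have hinj : Function.Injective fun i : Fin n => m.get (Fin.cast hlen.symm i) := by
        intro i j hij
        have := (List.nodup_iff_injective_get).mp hnd hij
        simpa [Fin.ext_iff] using this
      let σ : Equiv.Perm (Fin n) :=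
        Equiv.ofBijective _ ((Finite.injective_iff_bijective).mp hinj)
      have hmofn : m = List.ofFn ⇑σ := by
        apply List.ext_get (by simp [hlen])
        intro i h1 h2
        simp only [List.get_ofFn]
        rfl
      refine ⟨monom k n σ, Submodule.subset_span ⟨σ, rfl⟩, ?_⟩
      rw [monom, toT_tprod']
      rw [hmofn, List.map_ofFn]
      rfl
    obtain ⟨t, htγ, htT⟩ := hle hspan
    refine ⟨t, ⟨?_, htγ⟩, by rw [htT, hofn]⟩
    simp only [LiePow, SetLike.mem_coe, Submodule.mem_comap, htT]
    apply lnb_mem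
    intro y hy
    rw [List.mem_map] at hy
    obtain ⟨i, _, rfl⟩ := hy
    exact LieSubalgebra.subset_lieSpan ⟨Pi.single i 1, rfl⟩
end D

section E
variable {k : Type} [Field k] {n : ℕ} {V : Type} [AddCommGroup V] [Module k V]

/-- span of the left-normed bracketings of `ι`'s -/
noncomputable def Wspan (k : Type) [Field k] (V : Type) [AddCommGroup V] [Module k V] :
    Submodule k (TensorAlgebra k V) :=
  Submodule.span k {x | ∃ l : List V, x = lnb (l.map (TensorAlgebra.ι k))}

lemma W_lie_single : ∀ u ∈ Wspan k V, ∀ x : V, ⁅u, TensorAlgebra.ι k x⁆ ∈ Wspan k V := by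
  intro u hu x
  refine Submodule.span_induction ?_ ?_ ?_ ?_ hu
  · rintro w ⟨l, rfl⟩
    cases l with
    | nil => simp only [List.map_nil, lnb, zero_lie]; exact Submodule.zero_mem _
    | cons z zs =>
      have : (z :: zs).map (TensorAlgebra.ι k)
          = TensorAlgebra.ι k z :: zs.map (TensorAlgebra.ι k) := by simp
      rw [this, ← lnb_concat]
      refine Submodule.subset_span ⟨(z :: zs) ++ [x], ?_⟩
      simp
  · simp only [zero_lie]; exact Submodule.zero_mem _
  · intro a b _ _ ha hb; rw [add_lie]; exact add_mem ha hb
  · intro c a _ ha; rw [smul_lie]; exact Submodule.smul_mem _ c ha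

lemma W_lie (l : List V) : ∀ u ∈ Wspan k V, ⁅u, lnb (l.map (TensorAlgebra.ι k))⁆ ∈ Wspan k V := by
  induction l using List.reverseRecOn with
  | nil => intro u _; simp only [List.map_nil, lnb, lie_zero]; exact Submodule.zero_mem _
  | append_singleton l x ih =>
    intro u hu
    cases l with
    | nil =>
      simp only [List.nil_append, List.map_cons, List.map_nil, lnb, List.foldl_nil]
      exact W_lie_single u hu x
    | cons z zs =>
      have hmap : ((z :: zs) ++ [x]).map (TensorAlgebra.ι k)
          = TensorAlgebra.ι k z :: zs.map (TensorAlgebra.ι k) ++ [TensorAlgebra.ι k x] := by simp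
      rw [hmap, lnb_concat]
      have hB : lnb ((z :: zs).map (TensorAlgebra.ι k))
          = lnb (TensorAlgebra.ι k z :: zs.map (TensorAlgebra.ι k)) := by simp
      rw [leibniz_lie]
      refine add_mem ?_ ?_
      · exact W_lie_single _ (by rw [← hB]; exact ih u hu) x
      · rw [← lie_skew]
        refine neg_mem ?_
        rw [← hB]
        exact ih _ (W_lie_single u hu x)

/-- the `W`-span as a Lie subalgebra -/
noncomputable def WLie (k : Type) [Field k] (V : Type) [AddCommGroup V] [Module k V] :
    LieSubalgebra k (TensorAlgebra k V) :=
  { Wspan k V with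
    lie_mem' := fun {x y} hx hy => by
      show ⁅x, y⁆ ∈ Wspan k V
      have hx' : x ∈ Wspan k V := hx
      have hy' : y ∈ Wspan k V := hy
      refine Submodule.span_induction ?_ ?_ ?_ ?_ hy'
      · rintro w ⟨l, rfl⟩; exact W_lie l x hx'
      · simp only [lie_zero]; exact Submodule.zero_mem _
      · intro a b _ _ ha hb; rw [lie_add]; exact add_mem ha hb
      · intro c a _ ha; rw [lie_smul]; exact Submodule.smul_mem _ c ha }

lemma lieSpan_le_W :
    LieSubalgebra.lieSpan k (TensorAlgebra k V)
      (Set.range (TensorAlgebra.ι k : V →ₗ[k] TensorAlgebra k V)) ≤ WLie k V := by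
  rw [LieSubalgebra.lieSpan_le]
  rintro w ⟨x, rfl⟩
  exact Submodule.subset_span ⟨[x], by simp [lnb]⟩

lemma lnb_map_mem_Deg (l : List V) (hl : l ≠ []) :
    lnb (l.map (TensorAlgebra.ι k)) ∈ Deg k V l.length := by
  induction l using List.reverseRecOn with
  | nil => exact absurd rfl hl
  | append_singleton l x ih =>
    cases l with
    | nil =>
      simp only [List.nil_append, List.map_cons, List.map_nil, lnb, List.foldl_nil,
        List.length_cons, List.length_nil]
      exact ι_mem_Deg x
    | cons z zs =>
      have hmap : ((z :: zs) ++ [x]).map (TensorAlgebra.ι k)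
          = TensorAlgebra.ι k z :: zs.map (TensorAlgebra.ι k) ++ [TensorAlgebra.ι k x] := by simp
      rw [hmap, lnb_concat]
      have hB := ih (by simp)
      have : lnb (TensorAlgebra.ι k z :: zs.map (TensorAlgebra.ι k))
          = lnb ((z :: zs).map (TensorAlgebra.ι k)) := by simp
      rw [this]
      have h2 := lie_mem_Deg hB (ι_mem_Deg (k := k) x)
      simpa using h2

lemma Sa_lieSpan (a : Fin n → V) {w : TensorAlgebra k (Fin n → k)}
    (hw : w ∈ LieSubalgebra.lieSpan k (TensorAlgebra k (Fin n → k))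
      (Set.range (TensorAlgebra.ι k : (Fin n → k) →ₗ[k] TensorAlgebra k (Fin n → k)))) :
    Sa a w ∈ LieSubalgebra.lieSpan k (TensorAlgebra k V)
      (Set.range (TensorAlgebra.ι k : V →ₗ[k] TensorAlgebra k V)) := by
  set K := LieSubalgebra.lieSpan k (TensorAlgebra k V)
    (Set.range (TensorAlgebra.ι k : V →ₗ[k] TensorAlgebra k V)) with hK
  let K' : LieSubalgebra k (TensorAlgebra k (Fin n → k)) :=
    { Submodule.comap (Sa (k := k) a).toLinearMap K.toSubmodule with
      lie_mem' := fun {x y} hx hy => by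
        show ⁅x, y⁆ ∈ Submodule.comap (Sa (k := k) a).toLinearMap K.toSubmodule
        have hx' : Sa a x ∈ K := hx
        have hy' : Sa a y ∈ K := hy
        simp only [Submodule.mem_comap, AlgHom.toLinearMap_apply]
        rw [Ring.lie_def, map_sub, map_mul, map_mul, ← Ring.lie_def]
        exact K.lie_mem hx' hy' }
  have : LieSubalgebra.lieSpan k (TensorAlgebra k (Fin n → k))
      (Set.range (TensorAlgebra.ι k : (Fin n → k) →ₗ[k] TensorAlgebra k (Fin n → k))) ≤ K' := by
    rw [LieSubalgebra.lieSpan_le]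
    rintro w ⟨f, rfl⟩
    show Sa a (TensorAlgebra.ι k f) ∈ K
    rw [Sa, TensorAlgebra.lift_ι_apply]
    simp only [La, LinearMap.coe_sum, Finset.sum_apply, LinearMap.smulRight_apply,
      LinearMap.proj_apply]
    refine Submodule.sum_mem K.toSubmodule fun j _ => Submodule.smul_mem _ _ ?_
    exact LieSubalgebra.subset_lieSpan ⟨a j, rfl⟩
  exact this hw

lemma key_bracket {Γ : Type} [AddCommGroup Γ] [Module k Γ]
    (uΓ : Γ →ₗ[k] ⨂[k] (i : Fin n), (Fin n → k))
    (hΓinj : Function.Injective uΓ) (hΓ : LinearMap.range uΓ = gamman k n) (g : Γ)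
    (hg : toT k n (Fin n → k) (uΓ g)
      = lnb (List.ofFn fun i : Fin n => TensorAlgebra.ι k (Pi.single i (1 : k))))
    (a : Fin n → V) :
    toT k n V (theta uΓ hΓinj hΓ V g (PiTensorProduct.tprod k a))
      = lnb (List.ofFn fun i => TensorAlgebra.ι k (a i)) := by
  rw [toT_theta, hg, map_lnb (Sa (k := k) a)]
  congr 1
  rw [List.map_ofFn]
  refine congrArg _ (funext fun i => ?_)
  simp only [Function.comp_apply]
  rw [Sa, TensorAlgebra.lift_ι_apply, La_single]

end E


/-- For every `V` there is a natural short exact sequence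
`Tor_1^{k(Σ_n)}(γ_n/Lie(n), V^{⊗n}) ↪ Lie(n) ⊗_{k(Σ_n)} V^{⊗n} ↠ L_n(V)`, the surjection
sending `[[x_1,x_2],…,x_n] ⊗ (a_1 ⊗ ⋯ ⊗ a_n)` to `[[a_1,a_2],…,a_n]`.  Since `γ_n` is free,
`Tor_1^{k(Σ_n)}(γ_n/Lie(n), V^{⊗n})` is the kernel of
`Lie(n) ⊗_{k(Σ_n)} V^{⊗n} → γ_n ⊗_{k(Σ_n)} V^{⊗n}`, which is how the kernel is identified
below.  (`Lie(n)` and `γ_n` are realized by modules `Λ`, `Γ`, and `⊗_{k(Σ_n)}` as the quotient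
by the balancing relations.) -/
theorem stmt8 (k : Type) [Field k] (n : ℕ) (V : Type) [AddCommGroup V] [Module k V]
    (Λ Γ : Type) [AddCommGroup Λ] [Module k Λ] [AddCommGroup Γ] [Module k Γ]
    (uΛ : Λ →ₗ[k] ⨂[k] (i : Fin n), (Fin n → k))
    (uΓ : Γ →ₗ[k] ⨂[k] (i : Fin n), (Fin n → k))
    (hΛinj : Function.Injective uΛ) (hΛ : LinearMap.range uΛ = LieMulti k n)
    (hΓinj : Function.Injective uΓ) (hΓ : LinearMap.range uΓ = gamman k n)
    (inc : Λ →ₗ[k] Γ) (hinc : uΓ.comp inc = uΛ) :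
    ∃ Φ : ((Λ ⊗[k] (⨂[k] (i : Fin n), V)) ⧸ balRel k n V Λ uΛ) →ₗ[k] ⨂[k] (i : Fin n), V,
      -- Φ is the natural map onto the Lie power L_n(V)
      LinearMap.range Φ = LiePow k n V ∧
      -- on generators it is given by bracketing
      (∀ x : Λ,
        toT k n (Fin n → k) (uΛ x)
            = lnb (List.ofFn fun i : Fin n => TensorAlgebra.ι k (Pi.single i (1 : k))) →
        ∀ a : Fin n → V,
          toT k n V (Φ (Submodule.Quotient.mk (x ⊗ₜ[k] PiTensorProduct.tprod k a)))
            = lnb (List.ofFn fun i : Fin n => TensorAlgebra.ι k (a i))) ∧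
      -- its kernel is Tor_1^{k(Σ_n)}(γ_n/Lie(n), V^{⊗n}), i.e. the kernel of the map
      -- Lie(n) ⊗_{k(Σ_n)} V^{⊗n} → γ_n ⊗_{k(Σ_n)} V^{⊗n} induced by the inclusion
      (∀ z : Λ ⊗[k] (⨂[k] (i : Fin n), V),
        Φ (Submodule.Quotient.mk z) = 0 ↔
          (Submodule.Quotient.mk (LinearMap.rTensor (⨂[k] (i : Fin n), V) inc z)
            : (Γ ⊗[k] (⨂[k] (i : Fin n), V)) ⧸ balRel k n V Γ uΓ) = 0) := by
  have huΓinc : ∀ x : Λ, uΓ (inc x) = uΛ x := fun x =>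
    congrArg (fun f => f x) (congrArg DFunLike.coe hinc)
  have hbalΓ : balRel k n V Γ uΓ
      ≤ LinearMap.ker (TensorProduct.lift (theta uΓ hΓinj hΓ V)) := by
    rw [balRel, Submodule.span_le]
    rintro z ⟨x, y, σ, v, h1, rfl⟩
    simp only [SetLike.mem_coe, LinearMap.mem_ker, map_sub, TensorProduct.lift.tmul]
    rw [theta_equivar uΓ hΓinj hΓ x y σ h1]
    simp
  have hbalΛ : balRel k n V Λ uΛ
      ≤ LinearMap.ker (TensorProduct.lift (theta uΓ hΓinj hΓ V)
          ∘ₗ LinearMap.rTensor (⨂[k] (i : Fin n), V) inc) := by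
    rw [balRel, Submodule.span_le]
    rintro z ⟨x, y, σ, v, h1, rfl⟩
    simp only [SetLike.mem_coe, LinearMap.mem_ker, map_sub, LinearMap.comp_apply,
      LinearMap.rTensor_tmul, TensorProduct.lift.tmul]
    rw [theta_equivar uΓ hΓinj hΓ (inc x) (inc y) σ (by rw [huΓinc, huΓinc, h1])]
    simp
  refine ⟨Submodule.liftQ _ _ hbalΛ, ?_, ?_, ?_⟩
  · -- range = LiePow
    rw [Submodule.range_liftQ]
    apply le_antisymm
    · rintro w ⟨z, rfl⟩
      induction z using TensorProduct.induction_on with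
      | zero => simp only [map_zero]; exact Submodule.zero_mem _
      | tmul x v =>
        simp only [LinearMap.comp_apply, LinearMap.rTensor_tmul, TensorProduct.lift.tmul]
        induction v using PiTensorProduct.induction_on with
        | smul_tprod r a =>
          rw [map_smul]
          refine Submodule.smul_mem _ r ?_
          simp only [LiePow, Submodule.mem_comap]
          rw [toT_theta, huΓinc]
          apply Sa_lieSpan
          have hmem : uΛ x ∈ LieMulti k n := hΛ ▸ LinearMap.mem_range_self uΛ x
          exact Submodule.mem_comap.mp (Submodule.mem_inf.mp hmem).1
        | add v₁ v₂ h1 h2 =>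
          rw [map_add]
          exact Submodule.add_mem _ h1 h2
      | add z₁ z₂ h1 h2 =>
        rw [map_add]
        exact Submodule.add_mem _ h1 h2
    · intro v hv
      have hW : toT k n V v ∈ Wspan k V :=
        lieSpan_le_W (Submodule.mem_comap.mp hv)
      obtain ⟨t, htM, htT⟩ := exists_t (k := k) (n := n)
      obtain ⟨x₀, hx₀⟩ : t ∈ LinearMap.range uΛ := hΛ ▸ htM
      have hx₀' : toT k n (Fin n → k) (uΛ x₀)
          = lnb (List.ofFn fun i : Fin n => TensorAlgebra.ι k (Pi.single i (1 : k))) := by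
        rw [hx₀, htT]
      have hWle : Wspan k V ≤ Submodule.comap (piProj (k := k) (n := n) (V := V))
          (LinearMap.range (TensorProduct.lift (theta uΓ hΓinj hΓ V)
            ∘ₗ LinearMap.rTensor (⨂[k] (i : Fin n), V) inc)) := by
        rw [Wspan, Submodule.span_le]
        rintro w ⟨l, rfl⟩
        simp only [SetLike.mem_coe, Submodule.mem_comap]
        rcases eq_or_ne l [] with rfl | hl
        · show piProj (lnb []) ∈ _
          show piProj (0 : TensorAlgebra k V) ∈ _
          rw [map_zero]
          exact Submodule.zero_mem _
        by_cases hlen : l.length = n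
        · have hl' : l = List.ofFn (fun i : Fin n => l.get (Fin.cast hlen.symm i)) := by
            apply List.ext_get (by simp [hlen])
            intro i h1 h2
            rw [List.get_ofFn]
            rfl
          have hmap : l.map (TensorAlgebra.ι k)
              = List.ofFn (fun i : Fin n =>
                  TensorAlgebra.ι k (l.get (Fin.cast hlen.symm i))) := by
            conv_lhs => rw [hl']
            rw [List.map_ofFn]
            rfl
          have hkey := key_bracket uΓ hΓinj hΓ (inc x₀) (by rw [huΓinc]; exact hx₀')
            (fun i : Fin n => l.get (Fin.cast hlen.symm i))
          rw [hmap, ← hkey, piProj_toT]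
          refine ⟨x₀ ⊗ₜ[k] PiTensorProduct.tprod k
            (fun i : Fin n => l.get (Fin.cast hlen.symm i)), ?_⟩
          simp only [LinearMap.comp_apply, LinearMap.rTensor_tmul, TensorProduct.lift.tmul]
        · rw [piProj_ne k n V hlen (lnb_map_mem_Deg l hl)]
          exact Submodule.zero_mem _
      have hmem := hWle hW
      rw [Submodule.mem_comap, piProj_toT] at hmem
      exact hmem
  · -- bracketing formula
    intro x hx a
    rw [Submodule.liftQ_apply]
    simp only [LinearMap.comp_apply, LinearMap.rTensor_tmul, TensorProduct.lift.tmul]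
    exact key_bracket uΓ hΓinj hΓ (inc x) (by rw [huΓinc]; exact hx) a
  · -- kernel identification
    intro z
    rw [Submodule.liftQ_apply, Submodule.Quotient.mk_eq_zero]
    constructor
    · intro h0
      -- ker (lift θ) ≤ balRel Γ
      have hF : ((balRel k n V Γ uΓ).mkQ)
          = ((balRel k n V Γ uΓ).mkQ ∘ₗ (TensorProduct.mk k Γ (⨂[k] (i : Fin n), V)
              (bGamma uΓ hΓinj hΓ 1)) ∘ₗ TensorProduct.lift (theta uΓ hΓinj hΓ V)) := by
        apply TensorProduct.ext'
        intro g v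
        have hAB : ((balRel k n V Γ uΓ).mkQ
              ∘ₗ ((TensorProduct.mk k Γ (⨂[k] (i : Fin n), V)).flip v))
            = (((balRel k n V Γ uΓ).mkQ ∘ₗ (TensorProduct.mk k Γ (⨂[k] (i : Fin n), V)
                (bGamma uΓ hΓinj hΓ 1)) ∘ₗ TensorProduct.lift (theta uΓ hΓinj hΓ V))
              ∘ₗ ((TensorProduct.mk k Γ (⨂[k] (i : Fin n), V)).flip v)) := by
          apply (bGamma uΓ hΓinj hΓ).ext
          intro σ
          simp only [LinearMap.comp_apply, LinearMap.flip_apply, TensorProduct.mk_apply,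
            TensorProduct.lift.tmul, theta_basis, Submodule.mkQ_apply]
          rw [Submodule.Quotient.eq]
          refine Submodule.subset_span
            ⟨bGamma uΓ hΓinj hΓ 1, bGamma uΓ hΓinj hΓ σ, σ, v, ?_, rfl⟩
          rw [uΓ_bGamma, uΓ_bGamma, rAct_monom, mul_one]
        have := congrArg (fun f => f g) (congrArg DFunLike.coe hAB)
        simpa only [LinearMap.comp_apply, LinearMap.flip_apply,
          TensorProduct.mk_apply] using this
      have h0' : TensorProduct.lift (theta uΓ hΓinj hΓ V)
          (LinearMap.rTensor (⨂[k] (i : Fin n), V) inc z) = 0 := h0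
      have := congrArg (fun f => f (LinearMap.rTensor (⨂[k] (i : Fin n), V) inc z))
        (congrArg DFunLike.coe hF)
      simp only [LinearMap.comp_apply, Submodule.mkQ_apply, h0', TensorProduct.mk_apply,
        TensorProduct.tmul_zero, map_zero] at this
      exact (Submodule.Quotient.mk_eq_zero _).mp this
    · intro hmem
      show (TensorProduct.lift (theta uΓ hΓinj hΓ V)
        ∘ₗ LinearMap.rTensor (⨂[k] (i : Fin n), V) inc) z = 0
      rw [LinearMap.comp_apply]
      exact LinearMap.mem_ker.mp (hbalΓ hmem)
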